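/- Let φ_n(x) = T_n(x/2), ψ_m(x) = U_m(x/2), and β the arcsine law on [−2,2]. Then ∫ φ_n·ψ_m dβ = 1 if n ≤ m and n ≡ m (mod 2), and ∫ φ_n·ψ_m dβ = 0 otherwise (i.e. if n > m or n and m have different parities). -/

import Mathlib

set_option maxHeartbeats 1000000

open MeasureTheory Real Polynomial Polynomial.Chebyshev
open Set intervalIntegral
open scoped NNReal ENNReal

/-- The arcsine law on `[-2,2]`. -/
noncomputable def arcsineLaw : Measure ℝ :=
  (volume.restrict (Set.Icc (-2 : ℝ) 2)).withDensity
    fun y => ENNReal.ofReal (1 / (π * Real.sqrt (4 - y ^ 2)))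


lemma U_add_two_eq (m : ℤ) : U ℝ (m+2) = U ℝ m + 2 * T ℝ (m+2) := by
  have h1 := U_add_two ℝ m
  have h2 := T_eq_U_sub_X_mul_U ℝ (m+2)
  have h3 : (m+2) - 1 = m+1 := by ring
  rw [h3] at h2
  linear_combination -h1 - 2*h2

lemma cos_int_integral (k : ℤ) :
    ∫ θ in (0:ℝ)..π, Real.cos (k*θ) = if k = 0 then π else 0 := by
  rcases eq_or_ne k 0 with rfl | hk
  · simp [Real.pi_pos.le]
  · rw [if_neg hk]
    have hd : ∀ θ : ℝ, HasDerivAt (fun t => Real.sin (k*t) / k) (Real.cos (k*θ)) θ := by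
      intro θ
      have := ((Real.hasDerivAt_sin (k*θ)).comp θ ((hasDerivAt_id θ).const_mul (k:ℝ))).div_const (k:ℝ)
      refine this.congr_deriv ?_
      have hk' : (k:ℝ) ≠ 0 := Int.cast_ne_zero.mpr hk
      field_simp
    rw [intervalIntegral.integral_eq_sub_of_hasDerivAt (fun θ _ => hd θ)
      (((by fun_prop : Continuous fun θ : ℝ => Real.cos (k*θ))).intervalIntegrable 0 π)]
    simp [Real.sin_int_mul_pi]

lemma J_orth (a b : ℕ) : ∫ θ in (0:ℝ)..π, Real.cos (a*θ) * Real.cos (b*θ)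
    = if a = b then (if a = 0 then π else π/2) else 0 := by
  have key : ∀ θ : ℝ, Real.cos (a*θ) * Real.cos (b*θ)
      = (Real.cos (((a+b : ℤ))*θ) + Real.cos (((a-b : ℤ))*θ)) / 2 := by
    intro θ
    push_cast
    rw [add_mul, sub_mul, Real.cos_add, Real.cos_sub]
    ring
  simp_rw [key]
  rw [intervalIntegral.integral_div, intervalIntegral.integral_add
      (((by fun_prop : Continuous fun θ : ℝ => Real.cos (((a+b:ℤ))*θ))).intervalIntegrable 0 π)
      (((by fun_prop : Continuous fun θ : ℝ => Real.cos (((a-b:ℤ))*θ))).intervalIntegrable 0 π),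
    cos_int_integral, cos_int_integral]
  rcases eq_or_ne a b with rfl | hab
  · rcases eq_or_ne a 0 with rfl | ha
    · norm_num
    · rw [if_neg (by omega), if_pos (by omega), if_pos rfl, if_neg ha]
      ring
  · rw [if_neg (by omega), if_neg (by omega), if_neg hab]
    norm_num

lemma K_eval (n m : ℕ) : ∫ θ in (0:ℝ)..π, Real.cos (n*θ) * (U ℝ m).eval (Real.cos θ)
    = if n ≤ m ∧ n % 2 = m % 2 then π else 0 := by
  induction m using Nat.twoStepInduction with
  | zero =>
    simp only [Nat.cast_zero, U_zero, eval_one, mul_one]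
    have := cos_int_integral n
    push_cast at this
    rw [this]
    by_cases hn : n = 0
    · simp [hn]
    · rw [if_neg (by exact_mod_cast hn), if_neg (by omega)]
  | one =>
    simp only [Nat.cast_one, U_one, eval_mul, eval_ofNat, eval_X]
    have : ∀ θ : ℝ, Real.cos (n*θ) * (2 * Real.cos θ) = 2 * (Real.cos (n*θ) * Real.cos ((1:ℕ)*θ)) := by
      intro θ; push_cast; ring
    simp_rw [this]
    rw [intervalIntegral.integral_const_mul, J_orth]
    by_cases hn : n = 1
    · subst hn; norm_num; ring
    · rw [if_neg hn, if_neg (by omega)]; ring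
  | more m ih _ =>
    have hcast : ((m + 2 : ℕ) : ℤ) = (m : ℤ) + 2 := by push_cast; ring
    have hU : ∀ θ : ℝ, (U ℝ (m+2 : ℕ)).eval (Real.cos θ)
        = (U ℝ m).eval (Real.cos θ) + 2 * Real.cos ((m+2 : ℕ)*θ) := by
      intro θ
      rw [hcast, U_add_two_eq]
      have hT := T_real_cos θ ((m:ℤ)+2)
      simp only [eval_add, eval_mul, eval_ofNat, hT]
      push_cast
      ring
    have key : ∀ θ : ℝ, Real.cos (n*θ) * (U ℝ (m+2 : ℕ)).eval (Real.cos θ)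
        = Real.cos (n*θ) * (U ℝ m).eval (Real.cos θ)
          + 2 * (Real.cos (n*θ) * Real.cos ((m+2 : ℕ)*θ)) := by
      intro θ; rw [hU]; ring
    simp_rw [key]
    rw [intervalIntegral.integral_add
        (((by fun_prop : Continuous fun θ : ℝ => Real.cos (n*θ) * (U ℝ m).eval (Real.cos θ))).intervalIntegrable 0 π)
        (((by fun_prop : Continuous fun θ : ℝ => 2 * (Real.cos (n*θ) * Real.cos ((m+2:ℕ)*θ)))).intervalIntegrable 0 π),
      intervalIntegral.integral_const_mul, ih, J_orth]
    by_cases hn : n = m + 2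
    · rw [if_pos hn, if_neg (by omega), if_neg (by omega), if_pos (by omega)]
      ring
    · rw [if_neg hn]
      by_cases hc : n ≤ m ∧ n % 2 = m % 2
      · rw [if_pos hc, if_pos (by omega)]; ring
      · rw [if_neg hc, if_neg (by omega)]; ring

lemma hasDerivAt_arccos_half {x : ℝ} (h1 : -2 < x) (h2 : x < 2) :
    HasDerivAt (fun y : ℝ => Real.arccos (y/2)) (-(Real.sqrt (4 - x^2))⁻¹) x := by
  have hx1 : x/2 ≠ -1 := by intro h; nlinarith [h]
  have hx2 : x/2 ≠ 1 := by intro h; nlinarith [h]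
  have := (Real.hasDerivAt_arccos hx1 hx2).comp x ((hasDerivAt_id x).div_const 2)
  refine this.congr_deriv ?_
  have hs : Real.sqrt (4 - x^2) = 2 * Real.sqrt (1 - (x/2)^2) := by
    rw [show (4:ℝ) - x^2 = 2^2 * (1 - (x/2)^2) by ring, Real.sqrt_mul (by positivity),
      Real.sqrt_sq (by norm_num : (0:ℝ) ≤ 2)]
  have hpos : 0 < Real.sqrt (1 - (x/2)^2) := by
    apply Real.sqrt_pos.mpr; nlinarith
  rw [hs]; field_simp

/-- `∫ φ_n ψ_m dβ = 1` if `n ≤ m` and `n ≡ m (mod 2)`, and `0` otherwise, where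
`φ_n(x) = T_n(x/2)`, `ψ_m(x) = U_m(x/2)` and `β` is the arcsine law on `[-2,2]`. -/
theorem chebyshev_T_U_arcsine_pairing (n m : ℕ) :
    ∫ x, (T ℝ n).eval (x / 2) * (U ℝ m).eval (x / 2) ∂arcsineLaw =
      if n ≤ m ∧ n % 2 = m % 2 then 1 else 0 := by
  set d : ℝ → ℝ := fun y => 1 / (π * Real.sqrt (4 - y^2)) with hd
  set h : ℝ → ℝ := fun x => (T ℝ n).eval (x/2) * (U ℝ m).eval (x/2) with hh
  set g : ℝ → ℝ := fun θ => Real.cos (n*θ) * (U ℝ m).eval (Real.cos θ) with hg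
  set f : ℝ → ℝ := fun x => Real.arccos (x/2) with hf
  set f' : ℝ → ℝ := fun x => -(Real.sqrt (4-x^2))⁻¹ with hf'
  have hdnn : ∀ y, 0 ≤ d y := fun y => by positivity
  have hgc : Continuous g :=
    (Real.continuous_cos.comp (continuous_const.mul continuous_id)).mul
      ((U ℝ m).continuous_aeval.comp Real.continuous_cos)
  have hfc : Continuous f := Real.continuous_arccos.comp (continuous_id.div_const 2)
  -- step 1: withDensity to set integral
  have step1 : ∫ x, h x ∂arcsineLaw = ∫ x in Icc (-2:ℝ) 2, d x * h x := by
    have hmeas : Measurable fun y : ℝ => (d y).toNNReal := by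
      apply Measurable.real_toNNReal
      apply Measurable.div measurable_const
      exact (measurable_const.mul (Real.continuous_sqrt.measurable.comp
        (measurable_const.sub (measurable_id.pow_const 2))))
    have := integral_withDensity_eq_integral_smul (μ := volume.restrict (Icc (-2:ℝ) 2))
      (f := fun y => (d y).toNNReal) hmeas h
    rw [arcsineLaw]
    rw [show (fun y : ℝ => ENNReal.ofReal (1 / (π * Real.sqrt (4 - y ^ 2))))
        = fun y : ℝ => ((d y).toNNReal : ℝ≥0∞) from rfl]
    rw [this]
    congr 1 with x
    rw [NNReal.smul_def, smul_eq_mul, Real.coe_toNNReal _ (hdnn x)]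
  -- step 2: to interval integral
  have step2 : ∫ x in Icc (-2:ℝ) 2, d x * h x = ∫ x in (-2:ℝ)..2, d x * h x := by
    rw [MeasureTheory.integral_Icc_eq_integral_Ioc,
      intervalIntegral.integral_of_le (by norm_num : (-2:ℝ) ≤ 2)]
  -- substitution
  have hderiv : ∀ x ∈ Ioo (-2:ℝ) 2, HasDerivAt f (f' x) x := fun x hx =>
    hasDerivAt_arccos_half hx.1 hx.2
  have hintinv : IntegrableOn (fun x : ℝ => (Real.sqrt (4-x^2))⁻¹) (Icc (-2:ℝ) 2) := by
    rw [integrableOn_Icc_iff_integrableOn_Ioc]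
    apply intervalIntegral.integrableOn_deriv_of_nonneg (g := fun x => -f x)
    · exact hfc.neg.continuousOn
    · intro x hx
      have := (hderiv x hx).neg
      refine this.congr_deriv ?_
      simp [hf']
    · intro x hx; positivity
  have hintf' : IntervalIntegrable f' volume (-2:ℝ) 2 := by
    rw [intervalIntegrable_iff_integrableOn_Icc_of_le (by norm_num)]
    exact hintinv.neg
  have hg2 : IntegrableOn (fun x => f' x • (g ∘ f) x) (Set.uIcc (-2:ℝ) 2) := by
    rw [← intervalIntegrable_iff']
    simp only [smul_eq_mul]
    exact hintf'.mul_continuousOn ((hgc.comp hfc).continuousOn)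
  have sub := intervalIntegral.integral_comp_smul_deriv''' (a := (-2:ℝ)) (b := 2)
    (f := f) (f' := f') (g := g) hfc.continuousOn
    (by
      intro x hx
      rw [show min (-2:ℝ) 2 = -2 by norm_num, show max (-2:ℝ) 2 = 2 by norm_num] at hx
      exact (hderiv x hx).hasDerivWithinAt)
    (hgc.continuousOn)
    (ContinuousOn.integrableOn_compact (isCompact_uIcc.image hfc) hgc.continuousOn)
    hg2
  have hfa : f (-2) = π := by simp [hf]
  have hfb : f 2 = 0 := by simp [hf]
  rw [hfa, hfb] at sub
  -- pointwise identity
  have hpt : EqOn (fun x => d x * h x) (fun x => (-π⁻¹) * (f' x • (g ∘ f) x)) (Set.uIcc (-2:ℝ) 2) := by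
    intro x hx
    rw [uIcc_of_le (by norm_num : (-2:ℝ) ≤ 2)] at hx
    have hc1 : -1 ≤ x/2 := by have := hx.1; linarith
    have hc2 : x/2 ≤ 1 := by have := hx.2; linarith
    have hcos : Real.cos (f x) = x/2 := Real.cos_arccos hc1 hc2
    have hgf : g (f x) = h x := by
      simp only [hg, hh]
      rw [← hcos]
      rw [show Real.cos ((n:ℝ) * f x) = (T ℝ (n:ℤ)).eval (Real.cos (f x)) by
        rw [T_real_cos]; push_cast; ring_nf]
    simp only [Function.comp_apply, hgf, smul_eq_mul, hd, hf', one_div, mul_inv]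
    ring
  rw [step1, step2, intervalIntegral.integral_congr hpt,
    intervalIntegral.integral_const_mul, sub,
    intervalIntegral.integral_symm, K_eval]
  by_cases hc : n ≤ m ∧ n % 2 = m % 2
  · rw [if_pos hc, if_pos hc]
    field_simp
  · rw [if_neg hc, if_neg hc]
    ring
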